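/- Let G = (V, E) be a simple undirected graph, let Λ be a strongly connected orientation of G, let v ∈ V, and let U be the set of vertices that two-reach v in the oriented digraph D = (V, Λ). Then the sum over u ∈ U of the indegree of u in Λ equals |E(G[U])| + c(G[V∖U]), where G[U] is the subgraph of G induced on U and c(G[V∖U]) is the number of connected components of the subgraph of G induced on V∖U. -/

import Mathlib

set_option linter.unusedSectionVars false


/-- The list of arcs (consecutive pairs) of a list of vertices. -/
def listArcs {V : Type*} (p : List V) : List (V × V) := p.zip p.tail

/-- `p` is a directed path from `u` to `v` in the digraph with arc set `A`. -/
def IsDipath {V : Type*} (A : Finset (V × V)) (u v : V) (p : List V) : Prop :=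
  p ≠ [] ∧ p.head? = some u ∧ p.getLast? = some v ∧ p.Nodup ∧
    p.Chain' (fun a b => (a, b) ∈ A)

/-- Two paths (given as vertex lists) are arc-disjoint. -/
def ArcDisjoint {V : Type*} (p q : List V) : Prop :=
  ∀ e ∈ listArcs p, e ∉ listArcs q

/-- `u` reaches `v`: there is a directed path from `u` to `v`. -/
def Reaches {V : Type*} (A : Finset (V × V)) (u v : V) : Prop :=
  ∃ p, IsDipath A u v p

/-- `u` two-reaches `v`: there are two arc-disjoint directed paths from `u` to `v`. -/
def TwoReaches {V : Type*} (A : Finset (V × V)) (u v : V) : Prop :=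
  ∃ p q, IsDipath A u v p ∧ IsDipath A u v q ∧ ArcDisjoint p q

/-- A digraph is strongly connected if every vertex reaches every other vertex. -/
def StronglyConnected {V : Type*} (A : Finset (V × V)) : Prop :=
  ∀ u v : V, Reaches A u v

/-- The digraph obtained by reversing every arc of the path `p`. -/
def reverseAlong {V : Type*} [DecidableEq V] (A : Finset (V × V)) (p : List V) :
    Finset (V × V) :=
  (A \ (listArcs p).toFinset) ∪ ((listArcs p).map Prod.swap).toFinset

/-- The indegree of a vertex in the digraph with arc set `A`. -/
def inDeg {V : Type*} [DecidableEq V] (A : Finset (V × V)) (v : V) : ℕ :=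
  (A.filter (fun e => e.2 = v)).card

/-- The indegree sequence: the indegrees of all vertices in non-increasing order. -/
def degSeq (V : Type*) [Fintype V] [DecidableEq V] (A : Finset (V × V)) : List ℕ :=
  ((Finset.univ.val.map (inDeg A)).sort (· ≤ ·)).reverse

/-- `A` is an orientation of the simple graph `G`: every edge of `G` gets exactly one
direction, and every arc of `A` comes from an edge of `G`. -/
def IsOrientation {V : Type*} (G : SimpleGraph V) (A : Finset (V × V)) : Prop :=
  (∀ a b : V, G.Adj a b ↔ ((a, b) ∈ A ∨ (b, a) ∈ A)) ∧
    ∀ a b : V, ¬((a, b) ∈ A ∧ (b, a) ∈ A)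

/-- The underlying undirected simple graph of a digraph. -/
def underlying {V : Type*} (A : Finset (V × V)) : SimpleGraph V :=
  SimpleGraph.fromRel (fun a b => (a, b) ∈ A)

/-- `p` is a directed path from `u` to `v` all of whose vertices lie in `S`. -/
def IsDipathIn {V : Type*} (A : Finset (V × V)) (S : Set V) (u v : V) (p : List V) : Prop :=
  IsDipath A u v p ∧ ∀ x ∈ p, x ∈ S

/-- `u` reaches `v` within the induced subdigraph on `S`. -/
def ReachesWithin {V : Type*} (A : Finset (V × V)) (S : Set V) (u v : V) : Prop :=
  ∃ p, IsDipathIn A S u v p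

section Basics
variable {V : Type*}

lemma listArcs_cons₂ (a b : V) (t : List V) :
    listArcs (a :: b :: t) = (a, b) :: listArcs (b :: t) := rfl

lemma mem_of_mem_listArcs : ∀ {p : List V} {e : V × V}, e ∈ listArcs p → e.1 ∈ p ∧ e.2 ∈ p := by
  intro p
  induction p with
  | nil => intro e h; simp [listArcs] at h
  | cons a t ih =>
    intro e h
    cases t with
    | nil => simp [listArcs] at h
    | cons b t' =>
      rw [listArcs_cons₂] at h
      rcases List.mem_cons.1 h with h | h
      · subst h; simp
      · have := ih h
        exact ⟨List.mem_cons_of_mem _ this.1, List.mem_cons_of_mem _ this.2⟩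

lemma chain'_iff_arcs {R : V → V → Prop} : ∀ {p : List V},
    p.Chain' R ↔ ∀ e ∈ listArcs p, R e.1 e.2 := by
  intro p
  induction p with
  | nil => simp [listArcs, List.Chain']
  | cons a t ih =>
    cases t with
    | nil => simp [listArcs, List.Chain']
    | cons b t' =>
      simp only [List.Chain'] at ih ⊢
      rw [List.isChain_cons_cons, listArcs_cons₂, ih]
      constructor
      · rintro ⟨h1, h2⟩ e he
        rcases List.mem_cons.1 he with rfl | he
        · exact h1
        · exact h2 e he
      · intro h
        exact ⟨h (a, b) (List.mem_cons_self), fun e he => h e (List.mem_cons_of_mem _ he)⟩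

lemma reaches_refl (A : Finset (V × V)) (u : V) : Reaches A u u :=
  ⟨[u], by simp [IsDipath, List.Chain']⟩

lemma isDipath_suffix {A : Finset (V × V)} {u v x : V} {p : List V}
    (hp : IsDipath A u v p) (hx : x ∈ p) :
    ∃ s t, p = s ++ x :: t ∧ IsDipath A x v (x :: t) := by
  obtain ⟨s, t, rfl⟩ := List.append_of_mem hx
  obtain ⟨-, -, hlast, hnd, hch⟩ := hp
  refine ⟨s, t, rfl, ?_, rfl, ?_, ?_, ?_⟩
  · simp
  · rw [List.getLast?_append] at hlast
    simpa using hlast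
  · exact ((List.nodup_append.1 hnd).2.1)
  · exact (List.isChain_append.1 hch).2.1

lemma reaches_cons {A : Finset (V × V)} {u b v : V} (hab : (u, b) ∈ A)
    (h : Reaches A b v) : Reaches A u v := by
  obtain ⟨q, hq⟩ := h
  by_cases hu : u ∈ q
  · obtain ⟨s, t, -, hpath⟩ := isDipath_suffix hq hu
    exact ⟨u :: t, hpath⟩
  · obtain ⟨hne, hhead, hlast, hnd, hch⟩ := hq
    obtain ⟨c, t, rfl⟩ := List.exists_cons_of_ne_nil hne
    obtain rfl : c = b := by simpa using hhead
    refine ⟨u :: c :: t, ?_, rfl, ?_, ?_, ?_⟩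
    · simp
    · rw [List.getLast?_cons_cons]; exact hlast
    · exact List.nodup_cons.2 ⟨hu, hnd⟩
    · exact List.isChain_cons_cons.2 ⟨hab, hch⟩

lemma reaches_of_walk {A : Finset (V × V)} : ∀ (p : List V) {u v : V},
    p.head? = some u → p.getLast? = some v → p.Chain' (fun a b => (a, b) ∈ A) →
    Reaches A u v := by
  intro p
  induction p with
  | nil => intro u v h; simp at h
  | cons a t ih =>
    intro u v hhead hlast hch
    obtain rfl : a = u := by simpa using hhead
    cases t with
    | nil =>
      have hv : a = v := by simpa using hlast
      rw [← hv]
      exact reaches_refl A a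
    | cons b t' =>
      rw [List.getLast?_cons_cons] at hlast
      have hch' := List.isChain_cons_cons.1 hch
      exact reaches_cons hch'.1 (ih rfl hlast hch'.2)

lemma Reaches.trans {A : Finset (V × V)} {a b c : V}
    (h1 : Reaches A a b) (h2 : Reaches A b c) : Reaches A a c := by
  obtain ⟨p, hp⟩ := h1
  obtain ⟨q, hqne, hqh, hql, -, hqc⟩ := h2
  cases q with
  | nil => exact absurd rfl hqne
  | cons x t =>
    have hxb : x = b := by simpa using hqh
    cases t with
    | nil =>
      have hbc : b = c := by subst hxb; simpa using hql
      exact hbc ▸ (⟨p, hp⟩ : Reaches A a b)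
    | cons y t' =>
      subst hxb
      obtain ⟨hpne, hph, hpl, -, hpc⟩ := hp
      refine reaches_of_walk (p ++ y :: t') ?_ ?_ ?_
      · rw [List.head?_append_of_ne_nil _ hpne]; exact hph
      · rw [List.getLast?_append]
        rw [List.getLast?_cons_cons] at hql
        simp [hql]
      · rw [List.Chain', List.isChain_append]
        refine ⟨hpc, (List.isChain_cons_cons.1 hqc).2, ?_⟩
        intro z hz w hw
        rw [hpl] at hz
        obtain rfl := Option.some_injective _ hz.symm
        obtain rfl : y = w := by simpa using hw
        exact (List.isChain_cons_cons.1 hqc).1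

lemma reaches_mono {A B : Finset (V × V)} (hAB : A ⊆ B) {u v : V}
    (h : Reaches A u v) : Reaches B u v := by
  obtain ⟨p, h1, h2, h3, h4, h5⟩ := h
  exact ⟨p, h1, h2, h3, h4, chain'_iff_arcs.2 fun e he => hAB (chain'_iff_arcs.1 h5 e he)⟩

lemma reaches_arc {A : Finset (V × V)} {a b : V} (h : (a, b) ∈ A) : Reaches A a b :=
  reaches_cons h (reaches_refl A b)

end Basics
section Cross
variable {V : Type*} [DecidableEq V] {A : Finset (V × V)} {P : V → Prop}

lemma arc_mem_of_path {u v : V} {p : List V} (hp : IsDipath A u v p)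
    {e : V × V} (he : e ∈ listArcs p) : e ∈ A :=
  chain'_iff_arcs.1 hp.2.2.2.2 e he

lemma isDipath_erase {g : V × V} {u v : V} {p : List V} (hp : IsDipath A u v p)
    (hgp : g ∉ listArcs p) : IsDipath (A.erase g) u v p := by
  obtain ⟨h1, h2, h3, h4, h5⟩ := hp
  refine ⟨h1, h2, h3, h4, chain'_iff_arcs.2 fun e he => ?_⟩
  exact Finset.mem_erase.2 ⟨fun h => hgp (by rw [← h]; exact he), chain'_iff_arcs.1 h5 e he⟩

lemma suffix_at_arc {u v : V} {p : List V} (hp : IsDipath A u v p)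
    {e : V × V} (he : e ∈ listArcs p) : Reaches A e.2 v := by
  obtain ⟨s, t, -, hpath⟩ := isDipath_suffix hp (mem_of_mem_listArcs he).2
  exact ⟨_, hpath⟩

lemma cross_rtg : ∀ (p : List V) {u w : V}, p.head? = some u → p.getLast? = some w →
    p.Chain' (fun a b => (a, b) ∈ A) → P u → ¬ P w →
    ∃ a b, (a, b) ∈ listArcs p ∧ P a ∧ ¬ P b ∧
      Relation.ReflTransGen (fun s t => (s, t) ∈ A ∧ P s ∧ P t) u a := by
  intro p
  induction p with
  | nil => simp
  | cons x t ih =>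
    intro u w hh hl hc hPu hPw
    obtain rfl : x = u := by simpa using hh
    cases t with
    | nil =>
      have hxw : x = w := by simpa using hl
      exact absurd (hxw ▸ hPu) hPw
    | cons b t' =>
      rw [List.getLast?_cons_cons] at hl
      have hc' := List.isChain_cons_cons.1 hc
      by_cases hPb : P b
      · obtain ⟨a', b', harc, h1, h2, h3⟩ := ih rfl hl hc'.2 hPb hPw
        exact ⟨a', b', List.mem_cons_of_mem _ harc, h1, h2,
          Relation.ReflTransGen.head ⟨hc'.1, hPu, hPb⟩ h3⟩
      · exact ⟨x, b, List.mem_cons_self, hPu, hPb, Relation.ReflTransGen.refl⟩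

lemma not_prop_propagate : ∀ (p : List V) {u : V}, p.head? = some u →
    (∀ a b, (a, b) ∈ listArcs p → ¬ P a → ¬ P b) → ¬ P u → ∀ z ∈ p, ¬ P z := by
  intro p
  induction p with
  | nil => simp
  | cons x t ih =>
    intro u hh hprop hPu z hz
    obtain rfl : x = u := by simpa using hh
    rcases List.mem_cons.1 hz with rfl | hz
    · exact hPu
    · cases t with
      | nil => simp at hz
      | cons b t' =>
        have hPb : ¬ P b := hprop x b (List.mem_cons_self) hPu
        exact ih rfl (fun a c hac => hprop a c (List.mem_cons_of_mem _ hac)) hPb z hz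

lemma crossing_unique : ∀ (p : List V), (∀ a b, (a, b) ∈ listArcs p → ¬ P a → ¬ P b) →
    ∀ {a b c d : V}, (a, b) ∈ listArcs p → (c, d) ∈ listArcs p →
    P a → ¬ P b → P c → ¬ P d → (a, b) = (c, d) := by
  intro p
  induction p with
  | nil => simp [listArcs]
  | cons x t ih =>
    intro hprop a b c d hab hcd hPa hPb hPc hPd
    cases t with
    | nil => simp [listArcs] at hab
    | cons y t' =>
      rw [listArcs_cons₂] at hab hcd
      have hprop' : ∀ a b, (a, b) ∈ listArcs (y :: t') → ¬ P a → ¬ P b :=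
        fun a b h => hprop a b (List.mem_cons_of_mem _ h)
      rcases List.mem_cons.1 hab with h1 | h1 <;> rcases List.mem_cons.1 hcd with h2 | h2
      · rw [h1, h2]
      · exfalso
        obtain ⟨rfl, rfl⟩ := Prod.mk.inj h1
        exact not_prop_propagate (b :: t') rfl hprop' hPb c (mem_of_mem_listArcs h2).1 hPc
      · exfalso
        obtain ⟨rfl, rfl⟩ := Prod.mk.inj h2
        exact not_prop_propagate (d :: t') rfl hprop' hPd a (mem_of_mem_listArcs h1).1 hPa
      · exact ih hprop' h1 h2 hPa hPb hPc hPd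

end Cross

section Index
variable {V : Type*}

lemma listArcs_take : ∀ (p : List V) (k : ℕ), listArcs (p.take (k + 1)) = (listArcs p).take k := by
  intro p
  induction p with
  | nil => intro k; simp [listArcs]
  | cons x t ih =>
    intro k
    cases t with
    | nil => simp [listArcs]
    | cons y t' =>
      cases k with
      | zero => simp [listArcs]
      | succ m =>
        rw [List.take_succ_cons, List.take_succ_cons, listArcs_cons₂,
          show listArcs (x :: y :: t') = (x, y) :: listArcs (y :: t') from rfl,
          List.take_succ_cons]
        congr 1
        rw [← ih m, List.take_succ_cons]

lemma indexOf_lt_of_mem_take {α : Type*} [DecidableEq α] :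
    ∀ (l : List α) (n : ℕ) (a : α), a ∈ l.take n → l.idxOf a < n := by
  intro l
  induction l with
  | nil => simp
  | cons x t ih =>
    intro n a ha
    cases n with
    | zero => simp at ha
    | succ m =>
      rw [List.take_succ_cons] at ha
      rcases List.mem_cons.1 ha with rfl | ha
      · simp
      · by_cases hax : a = x
        · subst hax; simp
        · rw [List.idxOf_cons_ne _ (Ne.symm hax)]
          exact Nat.succ_lt_succ (ih m a ha)

lemma head?_take_succ (p : List V) (n : ℕ) : (p.take (n + 1)).head? = p.head? := by
  cases p <;> simp

lemma length_listArcs (p : List V) : (listArcs p).length = p.length - 1 := by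
  cases p with
  | nil => simp [listArcs]
  | cons x t => simp [listArcs]

end Index
section Splice
variable {V : Type*} [DecidableEq V]

lemma arc_eq_getElem {p : List V} {i : ℕ} (hi : i < (listArcs p).length) :
    (listArcs p)[i] = (p[i]'(by rw [length_listArcs] at hi; omega),
      p[i+1]'(by rw [length_listArcs] at hi; omega)) := by
  simp only [listArcs, List.getElem_zip, List.getElem_tail]

lemma listArcs_nodup : ∀ {p : List V}, p.Nodup → (listArcs p).Nodup := by
  intro p
  induction p with
  | nil => intro _; simp [listArcs]
  | cons a t ih =>
    intro hnd
    cases t with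
    | nil => simp [listArcs]
    | cons b t' =>
      rw [listArcs_cons₂, List.nodup_cons]
      refine ⟨fun hmem => ?_, ih (List.nodup_cons.1 hnd).2⟩
      have := (mem_of_mem_listArcs hmem).1
      exact (List.nodup_cons.1 hnd).1 this

lemma not_mem_take_of_nodup {α : Type*} {L : List α} (hnd : L.Nodup) {j : ℕ}
    (hj : j < L.length) {n : ℕ} (hn : n ≤ j) : L[j] ∉ L.take n := by
  intro hmem
  obtain ⟨k, hk, hkeq⟩ := List.mem_iff_getElem.1 hmem
  rw [List.length_take] at hk
  have hk2 : k < L.length := by omega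
  rw [List.getElem_take] at hkeq
  have : k = j := (List.Nodup.getElem_inj_iff hnd).1 hkeq
  omega

lemma splice {A : Finset (V × V)} {c v : V} {p : List V} (hp : IsDipath A c v p)
    (g : V × V) (i : ℕ) (hiL : i < (listArcs p).length)
    (hg : g ∉ (listArcs p).take (i + 1))
    (hreach : Reaches (A.erase g) ((listArcs p)[i]).2 v) : Reaches (A.erase g) c v := by
  have hlen : (listArcs p).length = p.length - 1 := length_listArcs p
  have hplen : i + 1 < p.length := by omega
  have he2 : ((listArcs p)[i]'hiL).2 = p[i+1]'hplen := by rw [arc_eq_getElem hiL]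
  rw [he2] at hreach
  refine Reaches.trans (reaches_of_walk (p.take (i + 2)) ?_ ?_ ?_) hreach
  · rw [head?_take_succ]
    exact hp.2.1
  · have hlen2 : (p.take (i + 2)).length = i + 2 := by
      rw [List.length_take]; omega
    rw [List.getLast?_eq_getElem?, hlen2]
    simp only [show i + 2 - 1 = i + 1 from rfl]
    rw [List.getElem?_take, if_pos (by omega), List.getElem?_eq_getElem hplen]
  · refine chain'_iff_arcs.2 fun a ha => ?_
    rw [listArcs_take] at ha
    have haL : a ∈ listArcs p := List.mem_of_mem_take ha
    refine Finset.mem_erase.2 ⟨?_, chain'_iff_arcs.1 hp.2.2.2.2 a haL⟩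
    intro hag
    exact hg (hag ▸ ha)

end Splice
section Flow
variable {V : Type*} [DecidableEq V]

/-- Out-count minus in-count of a vertex in an arc set. -/
def bal (M : Finset (V × V)) (w : V) : ℤ :=
  ((M.filter (fun e => e.1 = w)).card : ℤ) - ((M.filter (fun e => e.2 = w)).card : ℤ)

lemma bal_union {M N : Finset (V × V)} (h : Disjoint M N) (w : V) :
    bal (M ∪ N) w = bal M w + bal N w := by
  unfold bal
  rw [Finset.filter_union, Finset.filter_union,
    Finset.card_union_of_disjoint (h.mono (Finset.filter_subset _ _) (Finset.filter_subset _ _)),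
    Finset.card_union_of_disjoint (h.mono (Finset.filter_subset _ _) (Finset.filter_subset _ _))]
  push_cast
  ring

lemma bal_sdiff {M N : Finset (V × V)} (h : N ⊆ M) (w : V) :
    bal (M \ N) w = bal M w - bal N w := by
  unfold bal
  have h1 : ∀ (q : V × V → Prop) (_ : DecidablePred q), ((M \ N).filter q) = (M.filter q) \ (N.filter q) := by
    intro q _
    ext a
    simp only [Finset.mem_filter, Finset.mem_sdiff]
    tauto
  rw [h1 _ inferInstance, h1 _ inferInstance,
    Finset.card_sdiff_of_subset (Finset.filter_subset_filter _ h),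
    Finset.card_sdiff_of_subset (Finset.filter_subset_filter _ h)]
  have c1 : (N.filter (fun e => e.1 = w)).card ≤ (M.filter (fun e => e.1 = w)).card :=
    Finset.card_le_card (Finset.filter_subset_filter _ h)
  have c2 : (N.filter (fun e => e.2 = w)).card ≤ (M.filter (fun e => e.2 = w)).card :=
    Finset.card_le_card (Finset.filter_subset_filter _ h)
  push_cast [Nat.cast_sub c1, Nat.cast_sub c2]
  ring

lemma bal_image_swap (M : Finset (V × V)) (w : V) :
    bal (M.image Prod.swap) w = - bal M w := by
  unfold bal
  have h1 : (M.image Prod.swap).filter (fun e => e.1 = w) = (M.filter (fun e => e.2 = w)).image Prod.swap := by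
    ext a
    simp only [Finset.mem_filter, Finset.mem_image]
    constructor
    · rintro ⟨⟨b, hb, rfl⟩, h⟩
      exact ⟨b, ⟨hb, h⟩, rfl⟩
    · rintro ⟨b, ⟨hb, h⟩, rfl⟩
      exact ⟨⟨b, hb, rfl⟩, h⟩
  have h2 : (M.image Prod.swap).filter (fun e => e.2 = w) = (M.filter (fun e => e.1 = w)).image Prod.swap := by
    ext a
    simp only [Finset.mem_filter, Finset.mem_image]
    constructor
    · rintro ⟨⟨b, hb, rfl⟩, h⟩
      exact ⟨b, ⟨hb, h⟩, rfl⟩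
    · rintro ⟨b, ⟨hb, h⟩, rfl⟩
      exact ⟨⟨b, hb, rfl⟩, h⟩
  rw [h1, h2, Finset.card_image_of_injective _ Prod.swap_injective,
    Finset.card_image_of_injective _ Prod.swap_injective]
  ring

lemma bal_singleton (e : V × V) (w : V) :
    bal {e} w = (if e.1 = w then (1:ℤ) else 0) - (if e.2 = w then 1 else 0) := by
  unfold bal
  rw [Finset.filter_singleton, Finset.filter_singleton]
  by_cases h1 : e.1 = w <;> by_cases h2 : e.2 = w <;> simp [h1, h2]

lemma bal_erase {M : Finset (V × V)} {e : V × V} (he : e ∈ M) (w : V) :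
    bal (M.erase e) w = bal M w - bal {e} w := by
  rw [Finset.erase_eq, bal_sdiff (Finset.singleton_subset_iff.2 he)]

end Flow
section PathBal
variable {V : Type*} [DecidableEq V]

lemma arc_mem_dropLast_tail : ∀ {p : List V} {e : V × V}, e ∈ listArcs p →
    e.1 ∈ p.dropLast ∧ e.2 ∈ p.tail := by
  intro p
  induction p with
  | nil => intro e h; simp [listArcs] at h
  | cons a t ih =>
    intro e h
    cases t with
    | nil => simp [listArcs] at h
    | cons b t' =>
      rw [listArcs_cons₂] at h
      rw [List.dropLast_cons₂, List.tail_cons]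
      rcases List.mem_cons.1 h with rfl | h
      · exact ⟨List.mem_cons_self, List.mem_cons_self⟩
      · obtain ⟨h1, h2⟩ := ih h
        exact ⟨List.mem_cons_of_mem _ h1, List.mem_of_mem_tail h2⟩

lemma count_head_arcs : ∀ {p : List V}, p.Nodup → ∀ w : V,
    ((listArcs p).filter (fun e => e.1 = w)).length = if w ∈ p.dropLast then 1 else 0 := by
  intro p
  induction p with
  | nil => intro _ w; simp [listArcs]
  | cons a t ih =>
    intro hnd w
    cases t with
    | nil => simp [listArcs]
    | cons b t' =>
      rw [listArcs_cons₂]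
      have hnd' := List.nodup_cons.1 hnd
      rw [List.dropLast_cons₂]
      by_cases haw : a = w
      · subst haw
        rw [List.filter_cons_of_pos (by simp)]
        have h0 : ((listArcs (b :: t')).filter (fun e => e.1 = a)).length = 0 := by
          rw [List.length_eq_zero_iff, List.filter_eq_nil_iff]
          intro e he
          simp only [decide_eq_true_eq]
          intro hea
          exact hnd'.1 (hea ▸ (mem_of_mem_listArcs he).1)
        simp only [List.length_cons, h0]
        rw [if_pos (List.mem_cons_self)]
      · rw [List.filter_cons_of_neg (by simpa using haw), ih hnd'.2 w]
        by_cases hw : w ∈ (b :: t').dropLast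
        · rw [if_pos hw, if_pos (List.mem_cons_of_mem _ hw)]
        · rw [if_neg hw, if_neg (fun hc => by
            rcases List.mem_cons.1 hc with rfl | hc
            · exact haw rfl
            · exact hw hc)]

lemma count_tail_arcs : ∀ {p : List V}, p.Nodup → ∀ w : V,
    ((listArcs p).filter (fun e => e.2 = w)).length = if w ∈ p.tail then 1 else 0 := by
  intro p
  induction p with
  | nil => intro _ w; simp [listArcs]
  | cons a t ih =>
    intro hnd w
    cases t with
    | nil => simp [listArcs]
    | cons b t' =>
      rw [listArcs_cons₂, List.tail_cons]
      have hnd' := List.nodup_cons.1 hnd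
      have hndt := List.nodup_cons.1 hnd'.2
      by_cases hbw : b = w
      · subst hbw
        rw [List.filter_cons_of_pos (by simp)]
        have h0 : ((listArcs (b :: t')).filter (fun e => e.2 = b)).length = 0 := by
          rw [List.length_eq_zero_iff, List.filter_eq_nil_iff]
          intro e he
          simp only [decide_eq_true_eq]
          intro heb
          have h2 := (arc_mem_dropLast_tail he).2
          rw [List.tail_cons, heb] at h2
          exact hndt.1 h2
        simp only [List.length_cons, h0]
        rw [if_pos (List.mem_cons_self)]
      · rw [List.filter_cons_of_neg (by simpa using hbw), ih hnd'.2 w]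
        rw [List.tail_cons]
        by_cases hw : w ∈ t'
        · rw [if_pos hw, if_pos (List.mem_cons_of_mem _ hw)]
        · rw [if_neg hw, if_neg (fun hc => by
            rcases List.mem_cons.1 hc with rfl | hc
            · exact hbw rfl
            · exact hw hc)]

lemma card_filter_arcs_toFinset {p : List V} (hnd : p.Nodup)
    (q : V × V → Prop) [DecidablePred q] :
    ((listArcs p).toFinset.filter q).card = ((listArcs p).filter (fun a => q a)).length := by
  have hnda := listArcs_nodup hnd
  have : ((listArcs p).filter (fun a => q a)).toFinset = (listArcs p).toFinset.filter q := by
    rw [List.toFinset_filter]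
    apply Finset.filter_congr
    intro e _
    simp
  rw [← this, List.toFinset_card_of_nodup (hnda.filter _)]

lemma bal_path {p : List V} (hnd : p.Nodup) {x v : V} (hh : p.head? = some x)
    (hl : p.getLast? = some v) (w : V) :
    bal (listArcs p).toFinset w
      = (if w = x then 1 else 0) - (if w = v then 1 else 0) := by
  unfold bal
  rw [card_filter_arcs_toFinset hnd, card_filter_arcs_toFinset hnd,
    count_head_arcs hnd w, count_tail_arcs hnd w]
  have hne : p ≠ [] := by rintro rfl; simp at hh
  obtain ⟨q, hq⟩ := List.getLast?_eq_some_iff.1 hl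
  obtain ⟨a, t, rfl⟩ := List.exists_cons_of_ne_nil hne
  obtain rfl : a = x := by simpa using hh
  have hdrop : (a :: t).dropLast = q := by rw [hq, List.dropLast_concat]
  have hvq : v ∉ q := by
    intro hv
    rw [hq] at hnd
    obtain ⟨-, -, hdisj⟩ := List.nodup_append.1 hnd
    exact hdisj v hv v (List.mem_singleton.2 rfl) rfl
  have hat : a ∉ t := (List.nodup_cons.1 hnd).1
  rw [List.tail_cons, hdrop]
  by_cases hwa : w = a <;> by_cases hwv : w = v
  · -- w = a = v
    cases q with
    | nil =>
      have h2 : a = v ∧ t = [] := by simpa using hq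
      simp [h2.2, hwa, hwv, h2.1]
    | cons c q' =>
      exfalso
      have hac : a = c := by simpa using congrArg List.head? hq
      exact hvq (by rw [← hwv, hwa, hac]; exact List.mem_cons_self)
  · -- w = a ≠ v
    have haq : a ∈ q := by
      cases q with
      | nil =>
        exact absurd (hwa.trans (by simpa using congrArg List.head? hq)) hwv
      | cons c q' =>
        have hac : a = c := by simpa using congrArg List.head? hq
        rw [hac]
        exact List.mem_cons_self
    rw [if_pos (hwa ▸ haq), if_neg (fun h => hat (hwa ▸ h)), if_pos hwa, if_neg hwv]
    simp
  · -- w = v ≠ a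
    have hvt : v ∈ t := by
      have hvp : v ∈ a :: t := by rw [hq]; exact List.mem_append_right _ (List.mem_singleton.2 rfl)
      rcases List.mem_cons.1 hvp with h | h
      · exact absurd (hwv.trans h) hwa
      · exact h
    rw [if_neg (fun h => hvq (hwv ▸ h)), if_pos (hwv ▸ hvt), if_neg hwa, if_pos hwv]
    simp
  · -- w ≠ a, w ≠ v
    by_cases hwq : w ∈ q
    · have hwt : w ∈ t := by
        have : w ∈ a :: t := by rw [hq]; exact List.mem_append_left _ hwq
        rcases List.mem_cons.1 this with h | h
        · exact absurd h hwa
        · exact h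
      rw [if_pos hwq, if_pos hwt, if_neg hwa, if_neg hwv]
      simp
    · have hwt : w ∉ t := by
        intro hwt
        have : w ∈ q ++ [v] := by rw [← hq]; exact List.mem_cons_of_mem _ hwt
        rcases List.mem_append.1 this with h | h
        · exact hwq h
        · exact hwv (List.mem_singleton.1 h)
      rw [if_neg hwq, if_neg hwt, if_neg hwa, if_neg hwv]
      simp

end PathBal
section Extract
variable {V : Type*} [DecidableEq V]

lemma isDipath_mono {A B : Finset (V × V)} (hAB : A ⊆ B) {u v : V} {p : List V}
    (hp : IsDipath A u v p) : IsDipath B u v p := by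
  obtain ⟨h1, h2, h3, h4, h5⟩ := hp
  exact ⟨h1, h2, h3, h4, chain'_iff_arcs.2 fun e he => hAB (chain'_iff_arcs.1 h5 e he)⟩

lemma extract_path : ∀ (n : ℕ) (M : Finset (V × V)), M.card ≤ n →
    (∀ a : V, (a, a) ∉ M) → ∀ x v : V, x ≠ v → 1 ≤ bal M x →
    (∀ w : V, w ≠ x → w ≠ v → 0 ≤ bal M w) → Reaches M x v := by
  intro n
  induction n with
  | zero =>
    intro M hM _ x v _ hbx _
    have : M = ∅ := Finset.card_eq_zero.1 (Nat.le_zero.1 hM)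
    subst this
    simp [bal] at hbx
  | succ n ih =>
    intro M hM hloop x v hxv hbx hbw
    have hout : (M.filter (fun e => e.1 = x)).Nonempty := by
      rw [← Finset.card_pos]
      by_contra h
      push_neg at h
      have h0 : (M.filter (fun e => e.1 = x)).card = 0 := Nat.le_zero.1 h
      unfold bal at hbx
      rw [h0] at hbx
      simp at hbx
      omega
    obtain ⟨e, he⟩ := hout
    rw [Finset.mem_filter] at he
    obtain ⟨heM, he1⟩ := he
    obtain ⟨ex, y⟩ := e
    obtain rfl : x = ex := he1.symm
    have hyx : y ≠ x := by
      rintro rfl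
      exact hloop y heM
    by_cases hyv : y = v
    · subst hyv
      exact reaches_arc heM
    · have hcard : (M.erase (x, y)).card ≤ n := by
        rw [Finset.card_erase_of_mem heM]
        omega
      have hbalE : ∀ w, bal (M.erase (x, y)) w = bal M w - bal {(x, y)} w :=
        fun w => bal_erase heM w
      have hreach : Reaches (M.erase (x, y)) y v := by
        apply ih _ hcard (fun a ha => hloop a (Finset.mem_of_mem_erase ha)) y v hyv
        · rw [hbalE, bal_singleton]
          have hb0 := hbw y hyx hyv
          have hxy : ((x, y).1 = y) = False := eq_false (fun h => hyx (h : x = y).symm)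
          have hyy : ((x, y).2 = y) = True := eq_true rfl
          simp only [hxy, hyy, if_true, if_false]
          omega
        · intro w hwy hwv
          rw [hbalE, bal_singleton]
          have h2 : ((x, y).2 = w) = False := eq_false (fun h => hwy (h : y = w).symm)
          simp only [h2, if_false]
          by_cases hwx : w = x
          · have h1 : ((x, y).1 = w) = True := eq_true (show x = w from hwx.symm)
            simp only [h1, if_true]
            rw [hwx]
            omega
          · have h1 : ((x, y).1 = w) = False := eq_false (fun h => hwx (h : x = w).symm)
            simp only [h1, if_false]
            have := hbw w hwx hwv
            omega
      exact reaches_cons heM (reaches_mono (Finset.erase_subset _ _) hreach)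

end Extract
section Menger
variable {V : Type*} [DecidableEq V] {G : SimpleGraph V}

lemma listArcs_singleton (v : V) : listArcs [v] = [] := rfl

lemma isDipath_singleton (A : Finset (V × V)) (v : V) : IsDipath A v v [v] := by
  refine ⟨by simp, rfl, rfl, by simp, ?_⟩
  simp [List.Chain']

lemma twoReaches_refl (A : Finset (V × V)) (v : V) : TwoReaches A v v :=
  ⟨[v], [v], isDipath_singleton A v, isDipath_singleton A v,
    fun e he => absurd he (by simp [listArcs_singleton])⟩

lemma reverseAlong_eq (A : Finset (V × V)) (p : List V) :
    reverseAlong A p = (A \ (listArcs p).toFinset) ∪ ((listArcs p).toFinset.image Prod.swap) := by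
  unfold reverseAlong
  congr 1
  ext e
  simp only [List.mem_toFinset, List.mem_map, Finset.mem_image]

lemma twoReaches_of_residual {A : Finset (V × V)} (hor : IsOrientation G A)
    {x v : V} {P : List V} (hP : IsDipath A x v P) (hxv : x ≠ v)
    (hres : Reaches (reverseAlong A P) x v) : TwoReaches A x v := by
  obtain ⟨Q, hQ⟩ := hres
  have hRPA : (listArcs P).toFinset ⊆ A := by
    intro e he
    exact arc_mem_of_path hP (List.mem_toFinset.1 he)
  set RP := (listArcs P).toFinset with hRPdef
  set SW := RP.image Prod.swap with hSWdef
  set QS := (listArcs Q).toFinset with hQSdef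
  have hQsub : QS ⊆ (A \ RP) ∪ SW := by
    intro e he
    have := arc_mem_of_path hQ (List.mem_toFinset.1 he)
    rw [reverseAlong_eq] at this
    exact this
  set QA := QS ∩ (A \ RP) with hQAdef
  set QR := QS ∩ SW with hQRdef
  have hQSsplit : QS = QA ∪ QR := by
    rw [hQAdef, hQRdef, ← Finset.inter_union_distrib_left]
    exact (Finset.inter_eq_left.2 hQsub).symm
  have hdisjQAQR : Disjoint QA QR := by
    rw [Finset.disjoint_left]
    intro e heA heR
    have h1 : e ∈ A := (Finset.mem_sdiff.1 (Finset.mem_inter.1 heA).2).1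
    have h2 : e ∈ SW := (Finset.mem_inter.1 heR).2
    obtain ⟨g, hg, hge⟩ := Finset.mem_image.1 h2
    have hgA : g ∈ A := hRPA hg
    have : Prod.swap e ∈ A := by rw [← hge, Prod.swap_swap]; exact hgA
    exact hor.2 e.1 e.2 ⟨h1, this⟩
  set M := (RP \ (QR.image Prod.swap)) ∪ QA with hMdef
  have hsub1 : QR.image Prod.swap ⊆ RP := by
    intro g hg
    obtain ⟨e, he, hge⟩ := Finset.mem_image.1 hg
    have h2 : e ∈ SW := (Finset.mem_inter.1 he).2
    obtain ⟨r, hr, hre⟩ := Finset.mem_image.1 h2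
    rw [← hge, ← hre, Prod.swap_swap]
    exact hr
  have hdisjM : Disjoint (RP \ QR.image Prod.swap) QA := by
    rw [Finset.disjoint_left]
    intro e he heA
    have h1 : e ∈ RP := (Finset.mem_sdiff.1 he).1
    have h2 : e ∉ RP := (Finset.mem_sdiff.1 (Finset.mem_inter.1 heA).2).2
    exact h2 h1
  have hMA : M ⊆ A := by
    intro e he
    rcases Finset.mem_union.1 he with h | h
    · exact hRPA (Finset.mem_sdiff.1 h).1
    · exact (Finset.mem_sdiff.1 (Finset.mem_inter.1 h).2).1
  have hloop : ∀ a : V, (a, a) ∉ M := by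
    intro a ha
    exact G.loopless.irrefl a ((hor.1 a a).2 (Or.inl (hMA ha)))
  have hbalM : ∀ w, bal M w =
      ((if w = x then 1 else 0) - (if w = v then 1 else 0)) * 2 := by
    intro w
    have h1 : bal M w = bal (RP \ QR.image Prod.swap) w + bal QA w := bal_union hdisjM w
    have h2 : bal (RP \ QR.image Prod.swap) w = bal RP w - bal (QR.image Prod.swap) w :=
      bal_sdiff hsub1 w
    have h3 : bal (QR.image Prod.swap) w = - bal QR w := bal_image_swap QR w
    have h4 : bal QS w = bal QA w + bal QR w := by rw [hQSsplit]; exact bal_union hdisjQAQR w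
    have h5 : bal RP w = (if w = x then 1 else 0) - (if w = v then 1 else 0) :=
      bal_path hP.2.2.2.1 hP.2.1 hP.2.2.1 w
    have h6 : bal QS w = (if w = x then 1 else 0) - (if w = v then 1 else 0) :=
      bal_path hQ.2.2.2.1 hQ.2.1 hQ.2.2.1 w
    rw [h1, h2, h3]
    have : bal QR w + bal QA w = bal QS w := by rw [h4]; ring
    linarith [this, h5, h6]
  obtain ⟨p1, hp1⟩ : Reaches M x v := by
    apply extract_path M.card M le_rfl hloop x v hxv
    · rw [hbalM]
      simp [hxv]
    · intro w hwx hwv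
      rw [hbalM]
      simp [hwx, hwv]
  have harc1 : (listArcs p1).toFinset ⊆ M := by
    intro e he
    exact arc_mem_of_path hp1 (List.mem_toFinset.1 he)
  obtain ⟨p2, hp2⟩ : Reaches (M \ (listArcs p1).toFinset) x v := by
    apply extract_path M.card _ (le_trans (Finset.card_le_card (Finset.sdiff_subset)) le_rfl)
      (fun a ha => hloop a (Finset.mem_sdiff.1 ha).1) x v hxv
    · rw [bal_sdiff harc1, hbalM, bal_path hp1.2.2.2.1 hp1.2.1 hp1.2.2.1]
      simp [hxv]
    · intro w hwx hwv
      rw [bal_sdiff harc1, hbalM, bal_path hp1.2.2.2.1 hp1.2.1 hp1.2.2.1]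
      simp [hwx, hwv]
  refine ⟨p1, p2, isDipath_mono hMA hp1, isDipath_mono (le_trans Finset.sdiff_subset hMA) hp2, ?_⟩
  intro e he1 he2
  have h1 : e ∈ (listArcs p1).toFinset := List.mem_toFinset.2 he1
  have h2 : e ∈ M \ (listArcs p1).toFinset := arc_mem_of_path hp2 he2
  exact (Finset.mem_sdiff.1 h2).2 h1

lemma menger2 {A : Finset (V × V)} (hor : IsOrientation G A)
    (hsc : StronglyConnected A) {x v : V} (hx : ¬ TwoReaches A x v) :
    ∃ f ∈ A, ¬ Reaches (A.erase f) x v := by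
  by_cases hxv : x = v
  · exact absurd (hxv ▸ twoReaches_refl A v) hx
  obtain ⟨P, hP⟩ := hsc x v
  by_cases hres : Reaches (reverseAlong A P) x v
  · exact absurd (twoReaches_of_residual hor hP hxv hres) hx
  · set S : V → Prop := fun w => Reaches (reverseAlong A P) x w with hSdef
    have hxS : S x := reaches_refl _ x
    have hvS : ¬ S v := hres
    have hprop : ∀ a b : V, (a, b) ∈ listArcs P → ¬ S a → ¬ S b := by
      intro a b harc hSa hSb
      apply hSa
      refine Reaches.trans hSb (reaches_arc ?_)
      rw [reverseAlong_eq]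
      refine Finset.mem_union_right _ (Finset.mem_image.2 ⟨(a, b), List.mem_toFinset.2 harc, rfl⟩)
    obtain ⟨a, b, harc, hSa, hSb, -⟩ :=
      cross_rtg (A := A) P hP.2.1 hP.2.2.1 hP.2.2.2.2 hxS hvS
    refine ⟨(a, b), arc_mem_of_path hP harc, ?_⟩
    rintro ⟨q, hq⟩
    obtain ⟨c, d, hcd, hSc, hSd, -⟩ :=
      cross_rtg (A := A.erase (a, b)) q hq.2.1 hq.2.2.1 hq.2.2.2.2 hxS hvS
    have hcdA : (c, d) ∈ A.erase (a, b) := arc_mem_of_path hq hcd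
    have hcdP : (c, d) ∈ listArcs P := by
      by_contra hnot
      apply hSd
      refine Reaches.trans hSc (reaches_arc ?_)
      rw [reverseAlong_eq]
      exact Finset.mem_union_left _ (Finset.mem_sdiff.2
        ⟨Finset.mem_of_mem_erase hcdA, fun h => hnot (List.mem_toFinset.1 h)⟩)
    have := crossing_unique P hprop hcdP harc hSc hSd hSa hSb
    rw [this] at hcdA
    exact (Finset.mem_erase.1 hcdA).1 rfl

end Menger
section MainArg
variable {V : Type*} [DecidableEq V] {G : SimpleGraph V}

lemma arcs_forced {A : Finset (V × V)} {c v : V} {p : List V} {f : V × V}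
    (hp : IsDipath A c v p) (hcB : ¬ Reaches (A.erase f) c v) : f ∈ listArcs p := by
  by_contra h
  exact hcB ⟨p, isDipath_erase hp h⟩

lemma reaches_avoiding {A : Finset (V × V)} {u v : V} (h : TwoReaches A u v) (g : V × V) :
    Reaches (A.erase g) u v := by
  obtain ⟨p, q, hp, hq, hdisj⟩ := h
  by_cases hgp : g ∈ listArcs p
  · exact ⟨q, isDipath_erase hq (hdisj g hgp)⟩
  · exact ⟨p, isDipath_erase hp hgp⟩

lemma order_contra {A : Finset (V × V)} {c v : V} (hc : Reaches A c v)
    {f f' : V × V} (hff' : f ≠ f')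
    (hcB : ¬ Reaches (A.erase f) c v) (hcB' : ¬ Reaches (A.erase f') c v)
    (hf2 : Reaches (A.erase f') f.2 v) (hf'2 : Reaches (A.erase f) f'.2 v) : False := by
  obtain ⟨p, hp⟩ := hc
  have hfp : f ∈ listArcs p := arcs_forced hp hcB
  have hfp' : f' ∈ listArcs p := arcs_forced hp hcB'
  have hnd := listArcs_nodup hp.2.2.2.1
  obtain ⟨i, hi, hieq⟩ := List.mem_iff_getElem.1 hfp
  obtain ⟨j, hj, hjeq⟩ := List.mem_iff_getElem.1 hfp'
  have hij : i ≠ j := by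
    rintro rfl
    exact hff' (hieq ▸ hjeq ▸ rfl)
  rcases Nat.lt_or_ge i j with h | h
  · apply hcB'
    refine splice hp f' i hi ?_ ?_
    · have := not_mem_take_of_nodup hnd hj (n := i + 1) (by omega)
      rw [hjeq] at this
      exact this
    · rw [hieq]
      exact hf2
  · have hji : j < i := by omega
    apply hcB
    refine splice hp f j hj ?_ ?_
    · have := not_mem_take_of_nodup hnd hi (n := j + 1) (by omega)
      rw [hieq] at this
      exact this
    · rw [hjeq]
      exact hf'2

lemma step_lemma {A : Finset (V × V)} (hor : IsOrientation G A) (hsc : StronglyConnected A)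
    {v : V} {U : Finset V} (hU : ∀ u : V, u ∈ U ↔ TwoReaches A u v)
    {f : V × V} (hfU : f.2 ∈ U)
    {c c' : V} (hcB : ¬ Reaches (A.erase f) c v) (hc'U : c' ∉ U)
    (hadj : G.Adj c c') : ¬ Reaches (A.erase f) c' v := by
  intro hc'B
  rcases (hor.1 c c').1 hadj with harc | harc
  · have hccf : (c, c') = f := by
      by_contra hne
      exact hcB (Reaches.trans (reaches_arc (Finset.mem_erase.2 ⟨hne, harc⟩)) hc'B)
    apply hc'U
    rw [← hccf] at hfU
    exact hfU
  · have hc'nt : ¬ TwoReaches A c' v := fun h => hc'U ((hU c').2 h)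
    obtain ⟨f', hf'A, hc'B'⟩ := menger2 hor hsc hc'nt
    have hf'R : ∀ {R : List V}, IsDipath (A.erase f) c' v R → f' ∈ listArcs R := by
      intro R hR
      by_contra h
      exact hc'B' ⟨R, isDipath_erase (isDipath_mono (Finset.erase_subset _ _) hR) h⟩
    by_cases hff' : f' = f
    · exact hc'B' (hff' ▸ hc'B)
    · by_cases hcB' : Reaches (A.erase f') c v
      · have hfc : (c', c) = f' := by
          by_contra hne
          exact hc'B' (Reaches.trans (reaches_arc (Finset.mem_erase.2 ⟨hne, harc⟩)) hcB')
        obtain ⟨R, hR⟩ := hc'B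
        have h2 := suffix_at_arc hR (hf'R hR)
        rw [← hfc] at h2
        exact hcB h2
      · have hu1 : Reaches (A.erase f') f.2 v := reaches_avoiding ((hU _).1 hfU) f'
        have hf'2 : Reaches (A.erase f) f'.2 v := by
          obtain ⟨R, hR⟩ := hc'B
          exact suffix_at_arc hR (hf'R hR)
        exact order_contra (hsc c v) (Ne.symm hff') hcB hcB' hu1 hf'2

end MainArg
section Final
variable {V : Type*} [DecidableEq V] {G : SimpleGraph V}

lemma rtg_reachable {A : Finset (V × V)} (hor : IsOrientation G A) {U : Finset V} {x a : V}
    (h : Relation.ReflTransGen (fun s t => (s, t) ∈ A ∧ s ∉ U ∧ t ∉ U) x a) :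
    ∀ (hxm : x ∈ ((↑U : Set V)ᶜ : Set V)) (ham : a ∈ ((↑U : Set V)ᶜ : Set V)),
      (G.induce ((↑U : Set V)ᶜ)).Reachable ⟨x, hxm⟩ ⟨a, ham⟩ := by
  induction h with
  | refl => intro _ _; rfl
  | @tail b c hstep hlast ih =>
    intro hxm ham
    have hbm : b ∈ ((↑U : Set V)ᶜ : Set V) := by simpa using hlast.2.1
    refine (ih hxm hbm).trans (SimpleGraph.Adj.reachable ?_)
    exact (hor.1 b c).2 (Or.inl hlast.1)

lemma walk_B {A : Finset (V × V)} (hor : IsOrientation G A) (hsc : StronglyConnected A)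
    {v : V} {U : Finset V} (hU : ∀ u : V, u ∈ U ↔ TwoReaches A u v)
    {f : V × V} (hfU : f.2 ∈ U) :
    ∀ {a b : ((↑U : Set V)ᶜ : Set V)} (_ : (G.induce ((↑U : Set V)ᶜ)).Walk a b),
      ¬ Reaches (A.erase f) ↑a v → ¬ Reaches (A.erase f) ↑b v := by
  intro a b w
  induction w with
  | nil => exact id
  | @cons u w' b' hadj p ih =>
    intro ha
    apply ih
    exact step_lemma hor hsc hU hfU ha (fun hc => (w'.2 : ↑w' ∈ (↑U : Set V)ᶜ) (Finset.mem_coe.2 hc)) hadj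

theorem stmt_9' {V : Type*} [Fintype V] [DecidableEq V] (G : SimpleGraph V)
    (A : Finset (V × V)) (hor : IsOrientation G A) (hsc : StronglyConnected A)
    (v : V) (U : Finset V) (hU : ∀ u : V, u ∈ U ↔ TwoReaches A u v) :
    ∑ u ∈ U, inDeg A u =
      Nat.card (G.induce (↑U : Set V)).edgeSet +
        Nat.card ((G.induce ((↑U : Set V)ᶜ)).ConnectedComponent) := by
  classical
  have hvU : v ∈ U := (hU v).2 (twoReaches_refl A v)
  set s1 := A.filter (fun e => e.1 ∈ U ∧ e.2 ∈ U) with hs1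
  set s2 := A.filter (fun e => e.1 ∉ U ∧ e.2 ∈ U) with hs2
  -- Step A : sum of indegrees
  have hsum : ∑ u ∈ U, inDeg A u = (A.filter (fun e => e.2 ∈ U)).card := by
    unfold inDeg
    rw [← Finset.card_biUnion]
    · congr 1
      ext e
      simp only [Finset.mem_biUnion, Finset.mem_filter]
      constructor
      · rintro ⟨u, hu, heA, heu⟩
        exact ⟨heA, heu ▸ hu⟩
      · rintro ⟨heA, heU⟩
        exact ⟨e.2, heU, heA, rfl⟩
    · intro u1 _ u2 _ hne
      rw [Function.onFun, Finset.disjoint_left]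
      intro e he1 he2
      exact hne ((Finset.mem_filter.1 he1).2 ▸ (Finset.mem_filter.1 he2).2 ▸ rfl)
  have hsplit : (A.filter (fun e => e.2 ∈ U)).card = s1.card + s2.card := by
    have hun : A.filter (fun e => e.2 ∈ U) = s1 ∪ s2 := by
      ext e
      simp only [hs1, hs2, Finset.mem_union, Finset.mem_filter]
      tauto
    rw [hun, Finset.card_union_of_disjoint]
    rw [Finset.disjoint_left]
    intro e he1 he2
    exact (Finset.mem_filter.1 he2).2.1 (Finset.mem_filter.1 he1).2.1
  -- Step B : edges of G[U]
  have hedge : Nat.card (G.induce (↑U : Set V)).edgeSet = s1.card := by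
    rw [← Nat.card_eq_finsetCard s1]
    refine (Nat.card_eq_of_bijective
      (fun e => (⟨s(⟨e.1.1, Finset.mem_coe.2 (Finset.mem_filter.1 e.2).2.1⟩,
        ⟨e.1.2, Finset.mem_coe.2 (Finset.mem_filter.1 e.2).2.2⟩),
        (G.induce (↑U : Set V)).mem_edgeSet.2
          (by exact (hor.1 e.1.1 e.1.2).2 (Or.inl (Finset.mem_filter.1 e.2).1))⟩ :
          (G.induce (↑U : Set V)).edgeSet) ) ⟨?_, ?_⟩).symm
    · -- injective
      rintro ⟨e, he⟩ ⟨e', he'⟩ heq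
      have h2 := congrArg Subtype.val heq
      rw [Sym2.eq_iff] at h2
      apply Subtype.ext
      rcases h2 with ⟨ha, hb⟩ | ⟨ha, hb⟩
      · exact Prod.ext (congrArg Subtype.val ha) (congrArg Subtype.val hb)
      · exfalso
        have h1 : e.1 = e'.2 := congrArg Subtype.val ha
        have h2' : e.2 = e'.1 := congrArg Subtype.val hb
        apply hor.2 e'.1 e'.2
        constructor
        · rw [Prod.mk.eta]
          exact (Finset.mem_filter.1 he').1
        · rw [show (e'.2, e'.1) = e from by rw [← h1, ← h2', Prod.mk.eta]]
          exact (Finset.mem_filter.1 he).1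
    · -- surjective
      rintro ⟨E, hE⟩
      obtain ⟨⟨⟨a, ha⟩, ⟨b, hb⟩⟩, rfl⟩ := Quot.exists_rep E
      have hadj : G.Adj a b := hE
      rcases (hor.1 a b).1 hadj with harc | harc
      · refine ⟨⟨(a, b), Finset.mem_filter.2 ⟨harc, Finset.mem_coe.1 ha, Finset.mem_coe.1 hb⟩⟩, ?_⟩
        apply Subtype.ext
        rfl
      · refine ⟨⟨(b, a), Finset.mem_filter.2 ⟨harc, Finset.mem_coe.1 hb, Finset.mem_coe.1 ha⟩⟩, ?_⟩
        apply Subtype.ext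
        exact Sym2.eq_swap
  -- Step C : components of G - U
  have hcomp : Nat.card ((G.induce ((↑U : Set V)ᶜ)).ConnectedComponent) = s2.card := by
    rw [← Nat.card_eq_finsetCard s2]
    refine (Nat.card_eq_of_bijective
      (fun e => (G.induce ((↑U : Set V)ᶜ)).connectedComponentMk
        ⟨e.1.1, by simpa using (Finset.mem_filter.1 e.2).2.1⟩) ⟨?_, ?_⟩).symm
    · -- injective
      rintro ⟨e1, he1⟩ ⟨e2, he2⟩ heq
      obtain ⟨h1A, h1x, h1u⟩ := Finset.mem_filter.1 he1
      obtain ⟨h2A, h2x, h2u⟩ := Finset.mem_filter.1 he2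
      have hreach := SimpleGraph.ConnectedComponent.exact heq
      obtain ⟨w⟩ := hreach
      -- get blocking arc for e1.1.1
      obtain ⟨f, hfA, hB⟩ := menger2 hor hsc (fun h => h1x ((hU e1.1).2 h))
      have hfe1 : e1 = f := by
        by_contra hne
        apply hB
        refine Reaches.trans (reaches_arc (Finset.mem_erase.2 ⟨?_, ?_⟩)) (reaches_avoiding ((hU _).1 h1u) f)
        · rw [Prod.mk.eta]; exact hne
        · rw [Prod.mk.eta]; exact h1A
      have hfU : f.2 ∈ U := hfe1 ▸ h1u
      have hB2 : ¬ Reaches (A.erase f) e2.1 v := walk_B hor hsc hU hfU w hB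
      have hfe2 : e2 = f := by
        by_contra hne
        apply hB2
        refine Reaches.trans (reaches_arc (Finset.mem_erase.2 ⟨?_, ?_⟩)) (reaches_avoiding ((hU _).1 h2u) f)
        · rw [Prod.mk.eta]; exact hne
        · rw [Prod.mk.eta]; exact h2A
      exact Subtype.ext (hfe1.trans hfe2.symm)
    · -- surjective
      refine SimpleGraph.ConnectedComponent.ind ?_
      rintro ⟨x, hx⟩
      have hxU : x ∉ U := by simpa using hx
      obtain ⟨p, hp⟩ := hsc x v
      obtain ⟨a, b, harc, haU, hbU, hrtg⟩ :=
        cross_rtg (A := A) (P := fun w => w ∉ U) p hp.2.1 hp.2.2.1 hp.2.2.2.2 hxU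
          (fun h => h hvU)
      have haA : (a, b) ∈ A := arc_mem_of_path hp harc
      have hbU' : b ∈ U := not_not.1 hbU
      refine ⟨⟨(a, b), Finset.mem_filter.2 ⟨haA, haU, hbU'⟩⟩, ?_⟩
      exact (SimpleGraph.ConnectedComponent.sound
        ((rtg_reachable hor hrtg hx (by simpa using haU)).symm)).symm ▸ rfl
  rw [hsum, hsplit, hedge, hcomp]

end Final

/-- For a strongly connected orientation `A` of a simple graph `G`, if `U` is the set of
vertices two-reaching `v`, then the sum of indegrees over `U` equals the number of edges
of `G[U]` plus the number of connected components of `G[V ∖ U]`. -/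
theorem stmt_9 {V : Type*} [Fintype V] [DecidableEq V] (G : SimpleGraph V)
    (A : Finset (V × V)) (hor : IsOrientation G A) (hsc : StronglyConnected A)
    (v : V) (U : Finset V) (hU : ∀ u : V, u ∈ U ↔ TwoReaches A u v) :
    ∑ u ∈ U, inDeg A u =
      Nat.card (G.induce (↑U : Set V)).edgeSet +
        Nat.card ((G.induce ((↑U : Set V)ᶜ)).ConnectedComponent) := by
  exact stmt_9' G A hor hsc v U hU
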